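/- Let f : [0,∞]^k → [0,∞] be a tropical power series, f(x) = inf over n ∈ ℕ^k of (n·x + c(n)) for a coefficient vector c : ℕ^k → [0,∞]. For every ε with 0 < ε < ∞, there exists a finite set F ⊆ ℕ^k such that f coincides on [ε,∞]^k with the tropical polynomial P(x) = min over n ∈ F of (n·x + c(n)). (Convention: min over the empty set is +∞.) -/

import Mathlib

open scoped ENNReal BigOperators

private noncomputable def tpsG (k : ℕ) (c : (Fin k → ℕ) → ℝ≥0∞) (ε : ℝ≥0∞)
    (n : Fin k → ℕ) : ℝ≥0∞ :=
  ((∑ i, n i : ℕ) : ℝ≥0∞) * ε + c n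

/-- Domination: if `m ≤ n` pointwise and `g m ≤ g n`, then the `m`-term is below the
`n`-term everywhere on `[ε,∞]^k`. -/
private lemma tps_dom {k : ℕ} {c : (Fin k → ℕ) → ℝ≥0∞} {ε : ℝ≥0∞} (hεtop : ε < ⊤)
    {x : Fin k → ℝ≥0∞} (hx : ∀ i, ε ≤ x i) {m n : Fin k → ℕ} (hmn : m ≤ n)
    (hg : tpsG k c ε m ≤ tpsG k c ε n) :
    (∑ i, (m i : ℝ≥0∞) * x i) + c m ≤ (∑ i, (n i : ℝ≥0∞) * x i) + c n := by
  set d : ℕ := (∑ i, n i) - (∑ i, m i) with hd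
  have hsum : ∑ i, m i ≤ ∑ i, n i := Finset.sum_le_sum fun i _ => hmn i
  have hnat : ∑ i, (n i - m i) = d := by
    have h1 : ∑ i, ((n i - m i) + m i) = ∑ i, n i :=
      Finset.sum_congr rfl fun i _ => Nat.sub_add_cancel (hmn i)
    rw [Finset.sum_add_distrib] at h1
    omega
  have hB : c m ≤ (d : ℝ≥0∞) * ε + c n := by
    have hfin : ((∑ i, m i : ℕ) : ℝ≥0∞) * ε ≠ ⊤ :=
      ENNReal.mul_ne_top (by simp) hεtop.ne
    have hsplit : ((∑ i, n i : ℕ) : ℝ≥0∞) = ((∑ i, m i : ℕ) : ℝ≥0∞) + d := by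
      rw [← Nat.cast_add]; congr 1; omega
    have h2 : ((∑ i, m i : ℕ) : ℝ≥0∞) * ε + c m ≤
        ((∑ i, m i : ℕ) : ℝ≥0∞) * ε + ((d : ℝ≥0∞) * ε + c n) := by
      calc ((∑ i, m i : ℕ) : ℝ≥0∞) * ε + c m ≤ ((∑ i, n i : ℕ) : ℝ≥0∞) * ε + c n := hg
        _ = _ := by rw [hsplit, add_mul, add_assoc]
    exact (ENNReal.add_le_add_iff_left hfin).mp h2
  have hA : (∑ i, (m i : ℝ≥0∞) * x i) + (d : ℝ≥0∞) * ε ≤ ∑ i, (n i : ℝ≥0∞) * x i := by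
    have hterm : ∀ i ∈ Finset.univ, (m i : ℝ≥0∞) * x i + ((n i - m i : ℕ) : ℝ≥0∞) * ε
        ≤ (n i : ℝ≥0∞) * x i := by
      intro i _
      calc (m i : ℝ≥0∞) * x i + ((n i - m i : ℕ) : ℝ≥0∞) * ε
          ≤ (m i : ℝ≥0∞) * x i + ((n i - m i : ℕ) : ℝ≥0∞) * x i :=
            add_le_add_right (mul_le_mul_right (hx i) _) _
        _ = (n i : ℝ≥0∞) * x i := by
            rw [← add_mul, ← Nat.cast_add, Nat.add_sub_cancel' (hmn i)]
    calc (∑ i, (m i : ℝ≥0∞) * x i) + (d : ℝ≥0∞) * ε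
        = ∑ i, ((m i : ℝ≥0∞) * x i + ((n i - m i : ℕ) : ℝ≥0∞) * ε) := by
          rw [Finset.sum_add_distrib, ← Finset.sum_mul, ← Nat.cast_sum, hnat]
      _ ≤ ∑ i, (n i : ℝ≥0∞) * x i := Finset.sum_le_sum hterm
  calc (∑ i, (m i : ℝ≥0∞) * x i) + c m
      ≤ (∑ i, (m i : ℝ≥0∞) * x i) + ((d : ℝ≥0∞) * ε + c n) := add_le_add_right hB _
    _ = ((∑ i, (m i : ℝ≥0∞) * x i) + (d : ℝ≥0∞) * ε) + c n := by rw [add_assoc]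
    _ ≤ _ := add_le_add_left hA _

/-- Every `n` has below it a "record" point `m` (strict min of `g` on its strict downset). -/
private lemma tps_exists_min (k : ℕ) (c : (Fin k → ℕ) → ℝ≥0∞) (ε : ℝ≥0∞) (n : Fin k → ℕ) :
    ∃ m, (∀ p, p < m → tpsG k c ε m < tpsG k c ε p) ∧ m ≤ n ∧ tpsG k c ε m ≤ tpsG k c ε n := by
  suffices H : ∀ N : ℕ, ∀ n : Fin k → ℕ, ∑ i, n i ≤ N →
      ∃ m, (∀ p, p < m → tpsG k c ε m < tpsG k c ε p) ∧ m ≤ n ∧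
        tpsG k c ε m ≤ tpsG k c ε n by
    exact H (∑ i, n i) n le_rfl
  intro N
  induction N with
  | zero =>
    intro n hn
    have hz : ∀ i, n i = 0 := fun i => by
      have h1 : n i ≤ ∑ j, n j :=
        Finset.single_le_sum (fun j _ => Nat.zero_le _) (Finset.mem_univ i)
      omega
    refine ⟨n, fun p hp => ?_, le_rfl, le_rfl⟩
    rcases lt_iff_le_and_ne.mp hp with ⟨hle, hne⟩
    exact absurd (funext fun i => by have h1 : p i ≤ n i := hle i; have h2 := hz i; omega) hne
  | succ N ih =>
    intro n hn
    by_cases hS : ∀ p, p < n → tpsG k c ε n < tpsG k c ε p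
    · exact ⟨n, hS, le_rfl, le_rfl⟩
    · push_neg at hS
      obtain ⟨p, hpn, hgp⟩ := hS
      have hps : ∑ i, p i < ∑ i, n i := by
        rcases Pi.lt_def.mp hpn with ⟨hle, i, hi⟩
        exact Finset.sum_lt_sum (fun j _ => hle j) ⟨i, Finset.mem_univ i, hi⟩
      obtain ⟨m, hmS, hmp, hgm⟩ := ih p (by omega)
      exact ⟨m, hmS, hmp.trans hpn.le, hgm.trans hgp⟩

/-- The set of record points is finite (Dickson's lemma). -/
private lemma tps_S_finite (k : ℕ) (c : (Fin k → ℕ) → ℝ≥0∞) {ε : ℝ≥0∞}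
    (hε0 : 0 < ε) (hεtop : ε < ⊤) :
    {n : Fin k → ℕ | ∀ m, m < n → tpsG k c ε n < tpsG k c ε m}.Finite := by
  set S := {n : Fin k → ℕ | ∀ m, m < n → tpsG k c ε n < tpsG k c ε m} with hSdef
  by_contra hinf
  have hinf' : S.Infinite := hinf
  set f := hinf'.natEmbedding with hf
  have hpwo : S.IsPWO :=
    Set.isPWO_of_wellQuasiOrderedLE S
  obtain ⟨φ, hφ⟩ := hpwo.exists_monotone_subseq
    (f := fun j => (f j : Fin k → ℕ)) (fun j => (f j).2)
  set a : ℕ → (Fin k → ℕ) := fun j => (f (φ j) : Fin k → ℕ) with ha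
  have haS : ∀ j, a j ∈ S := fun j => (f (φ j)).2
  have hainj : Function.Injective a := fun i j hij => by
    have : f (φ i) = f (φ j) := Subtype.ext hij
    exact φ.injective (f.injective this)
  have hamono : ∀ {i j : ℕ}, i < j → a i < a j := by
    intro i j hij
    exact lt_of_le_of_ne (hφ hij.le) (fun h => absurd (hainj h) hij.ne)
  -- sums strictly increase
  have hs : StrictMono (fun j => ∑ i, a j i) := by
    intro i j hij
    rcases Pi.lt_def.mp (hamono hij) with ⟨hle, i0, hi0⟩
    exact Finset.sum_lt_sum (fun q _ => hle q) ⟨i0, Finset.mem_univ i0, hi0⟩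
  have hsle : ∀ j, j ≤ ∑ i, a j i := fun j => hs.le_apply
  -- g (a 1) is finite
  have hG : tpsG k c ε (a 1) < ⊤ :=
    lt_of_lt_of_le (haS 1 (a 0) (hamono Nat.zero_lt_one)) le_top
  set G := tpsG k c ε (a 1) with hGdef
  -- choose large j
  obtain ⟨j0, hj0⟩ := ENNReal.exists_nat_gt (ENNReal.div_lt_top hG.ne hε0.ne').ne
  set j := max j0 2 with hj
  have hj2 : 2 ≤ j := le_max_right _ _
  have hlow : (j : ℝ≥0∞) * ε ≤ tpsG k c ε (a j) := by
    have h1 : (j : ℝ≥0∞) * ε ≤ ((∑ i, a j i : ℕ) : ℝ≥0∞) * ε :=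
      mul_le_mul_left (Nat.cast_le.mpr (hsle j)) ε
    exact h1.trans le_self_add
  have hup : tpsG k c ε (a j) < G := haS j (a 1) (hamono (by omega))
  have hGlt : G < (j : ℝ≥0∞) * ε := by
    have h1 : G / ε < (j : ℝ≥0∞) := lt_of_lt_of_le hj0 (Nat.cast_le.mpr (le_max_left _ _))
    rwa [ENNReal.div_lt_iff (Or.inl hε0.ne') (Or.inl hεtop.ne)] at h1
  exact absurd (hup.trans hGlt) (not_lt.mpr hlow)

/-- A tropical power series `f(x) = ⨅ n, (n·x + c n)` coincides on `[ε,∞]^k` with a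
tropical polynomial `P(x) = min_{n ∈ F} (n·x + c n)` for some finite `F ⊆ ℕ^k`
(the min over the empty set being `∞`). -/
theorem tps_eq_polynomial_on_eps (k : ℕ) (c : (Fin k → ℕ) → ℝ≥0∞) (ε : ℝ≥0∞)
    (hε0 : 0 < ε) (hεtop : ε < ⊤) :
    ∃ F : Finset (Fin k → ℕ), ∀ x : Fin k → ℝ≥0∞, (∀ i, ε ≤ x i) →
      (⨅ n : Fin k → ℕ, (∑ i, (n i : ℝ≥0∞) * x i) + c n)
        = F.inf (fun n => (∑ i, (n i : ℝ≥0∞) * x i) + c n) := by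
  have hfin := tps_S_finite k c hε0 hεtop
  refine ⟨hfin.toFinset, fun x hx => le_antisymm ?_ ?_⟩
  · exact Finset.le_inf fun n _ => iInf_le _ n
  · refine le_iInf fun n => ?_
    obtain ⟨m, hmS, hmn, hgm⟩ := tps_exists_min k c ε n
    have hmF : m ∈ hfin.toFinset := hfin.mem_toFinset.mpr (fun p hp => hmS p hp)
    calc hfin.toFinset.inf (fun n => (∑ i, (n i : ℝ≥0∞) * x i) + c n)
        ≤ (∑ i, (m i : ℝ≥0∞) * x i) + c m := Finset.inf_le hmF
      _ ≤ _ := tps_dom hεtop hx hmn hgm
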